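/- arXiv:1611.00724 — 6 statements merged into one kernel-verified Lean document; each statement's English description precedes it below -/
import Mathlib

section
/- Let f : ℝⁿ → ℝ be convex and locally K-Lipschitz about z with radius σ > 0, and let r > 0 satisfy 2K/r < σ. Then ‖Prox_f^r(z) − z‖ < 2K/r. -/
open scoped RealInnerProductSpace

theorem prox_dist_lt (n : ℕ) (f : EuclideanSpace ℝ (Fin n) → ℝ)
    (hf : ConvexOn ℝ Set.univ f) (K r σ : ℝ) (hK : 0 < K) (hr : 0 < r) (hσ : 0 < σ)
    (z : EuclideanSpace ℝ (Fin n))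
    (hLip : ∀ x ∈ Metric.ball z σ, ∀ y ∈ Metric.ball z σ, |f x - f y| ≤ K * ‖x - y‖)
    (hrσ : 2 * K / r < σ)
    (p : EuclideanSpace ℝ (Fin n))
    (hp : ∀ y, f p + r / 2 * ‖p - z‖ ^ 2 ≤ f y + r / 2 * ‖y - z‖ ^ 2) :
    ‖p - z‖ < 2 * K / r := by
  set d := ‖p - z‖ with hd_def
  have hd0 : 0 ≤ d := norm_nonneg _
  rcases eq_or_lt_of_le hd0 with hd | hd
  · rw [← hd]; positivity
  -- d > 0 case
  set m := min d (σ / 2) with hm_def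
  have hm0 : 0 < m := lt_min hd (by positivity)
  have hmσ : m < σ := lt_of_le_of_lt (min_le_right _ _) (by linarith)
  set c := m / d with hc_def
  have hc0 : 0 < c := div_pos hm0 hd
  have hc1 : c ≤ 1 := (div_le_one hd).2 (min_le_left _ _)
  set w : EuclideanSpace ℝ (Fin n) := z + c • (p - z) with hw_def
  have hwz : w - z = c • (p - z) := by simp [hw_def]
  have hwznorm : ‖w - z‖ = m := by
    rw [hwz, norm_smul, Real.norm_eq_abs, abs_of_pos hc0, ← hd_def, hc_def,
      div_mul_cancel₀ _ (ne_of_gt hd)]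
  have hwball : w ∈ Metric.ball z σ := by
    rw [Metric.mem_ball, dist_eq_norm, hwznorm]; exact hmσ
  have hzball : z ∈ Metric.ball z σ := Metric.mem_ball_self hσ
  have hLipw : |f w - f z| ≤ K * m := by
    have := hLip w hwball z hzball
    rwa [hwznorm] at this
  -- convexity at w
  have hwcomb : w = (1 - c) • z + c • p := by
    rw [hw_def]; module
  have hconv : f w ≤ (1 - c) * f z + c * f p := by
    rw [hwcomb]
    exact hf.2 (Set.mem_univ z) (Set.mem_univ p) (by linarith) (le_of_lt hc0) (by ring)
  -- slope bound: f z - f p ≤ K * d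
  have hslope : f z - f p ≤ K * d := by
    have h1 : f z - f w ≤ K * m := by
      have := abs_le.1 hLipw
      linarith [this.1]
    have h2 : c * (f z - f p) ≤ f z - f w := by nlinarith
    have h3 : c * (f z - f p) ≤ K * (c * d) := by
      have : c * d = m := by rw [hc_def, div_mul_cancel₀ _ (ne_of_gt hd)]
      rw [this]; linarith
    have := (mul_le_mul_iff_right₀ hc0).1 (by linarith [h3] : c * (f z - f p) ≤ c * (K * d))
    linarith
  -- midpoint comparison
  set y : EuclideanSpace ℝ (Fin n) := (1/2 : ℝ) • z + (1/2 : ℝ) • p with hy_def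
  have hyz : y - z = (1/2 : ℝ) • (p - z) := by rw [hy_def]; module
  have hyznorm : ‖y - z‖ = d / 2 := by
    rw [hyz, norm_smul, Real.norm_eq_abs, abs_of_pos (by norm_num : (0:ℝ) < 1/2), ← hd_def]
    ring
  have hconvy : f y ≤ (1/2) * f z + (1/2) * f p := by
    rw [hy_def]
    exact hf.2 (Set.mem_univ z) (Set.mem_univ p) (by norm_num) (by norm_num) (by norm_num)
  have hmin := hp y
  rw [hyznorm] at hmin
  -- now combine
  rw [lt_div_iff₀ hr]
  nlinarith [mul_pos hr (mul_pos hd hd), mul_pos hd hd]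
end

section
/- Let f : ℝⁿ → ℝ be convex, and let x_k, z ∈ ℝⁿ with x_k ≠ z. Suppose g̃ ∈ ℝⁿ satisfies dist(g̃, ∂f(x_k)) < ε, and define g := g̃ − c_k where c_k = E_k(z − x_k)/‖z − x_k‖² with E_k := f(x_k) + g̃ᵀ(z − x_k) − f(z) > 0. Then dist(g, ∂f(x_k)) < ε. -/
open scoped RealInnerProductSpace

theorem corrected_subgradient_close (n : ℕ) (f : EuclideanSpace ℝ (Fin n) → ℝ)
    (hf : ConvexOn ℝ Set.univ f) (xk z : EuclideanSpace ℝ (Fin n)) (hne : xk ≠ z)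
    (ε : ℝ) (gt : EuclideanSpace ℝ (Fin n))
    (hdist : Metric.infDist gt {g : EuclideanSpace ℝ (Fin n) | ∀ y, f y ≥ f xk + ⟪g, y - xk⟫} < ε)
    (Ek : ℝ) (hEk : Ek = f xk + ⟪gt, z - xk⟫ - f z) (hEkpos : 0 < Ek)
    (g : EuclideanSpace ℝ (Fin n)) (hg : g = gt - (Ek / ‖z - xk‖ ^ 2) • (z - xk)) :
    Metric.infDist g {g : EuclideanSpace ℝ (Fin n) | ∀ y, f y ≥ f xk + ⟪g, y - xk⟫} < ε := by
  set S := {g : EuclideanSpace ℝ (Fin n) | ∀ y, f y ≥ f xk + ⟪g, y - xk⟫} with hSdef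
  have hd : (0:ℝ) < ‖z - xk‖ := by
    rw [norm_pos_iff, sub_ne_zero]; exact fun h => hne h.symm
  have hd2 : (0:ℝ) < ‖z - xk‖ ^ 2 := by positivity
  set t : ℝ := Ek / ‖z - xk‖ ^ 2 with ht
  have htpos : 0 < t := div_pos hEkpos hd2
  have htd : t * ‖z - xk‖ ^ 2 = Ek := div_mul_cancel₀ _ (ne_of_gt hd2)
  have key : ∀ s ∈ S, dist g s ≤ dist gt s := by
    intro s hs
    have hs' : f z ≥ f xk + ⟪s, z - xk⟫ := hs z
    have hinner : Ek ≤ ⟪gt - s, z - xk⟫ := by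
      rw [inner_sub_left]; linarith [hEk]
    have hgs : g - s = (gt - s) - t • (z - xk) := by
      rw [hg]; abel
    have hexp : ‖g - s‖ ^ 2 =
        ‖gt - s‖ ^ 2 - 2 * (t * ⟪gt - s, z - xk⟫) + t ^ 2 * ‖z - xk‖ ^ 2 := by
      rw [hgs, norm_sub_sq_real, real_inner_smul_right, norm_smul]
      rw [Real.norm_eq_abs, abs_of_pos htpos]
      ring
    have hsq : ‖g - s‖ ^ 2 ≤ ‖gt - s‖ ^ 2 := by
      nlinarith [mul_le_mul_of_nonneg_left hinner (le_of_lt htpos)]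
    have := Real.sqrt_le_sqrt hsq
    rwa [Real.sqrt_sq (norm_nonneg _), Real.sqrt_sq (norm_nonneg _),
      ← dist_eq_norm, ← dist_eq_norm] at this
  rcases Set.eq_empty_or_nonempty S with hE | hNE
  · simp [hE] at hdist ⊢; linarith
  · obtain ⟨y, hy, hlt⟩ := (Metric.infDist_lt_iff hNE).mp hdist
    exact lt_of_le_of_lt ((Metric.infDist_le_dist_of_mem hy).trans (key y hy)) hlt
end

section
/- Let f : ℝⁿ → ℝ be convex, z ∈ ℝⁿ, r > 0, ε ≥ 0. Let x* = Prox_f^r(z), and let φ be a convex function with x_{+} := Prox_φ^r(z) such that f(x) + ε‖x − x_{+}‖ ≥ φ(x_{+}) + r(z − x_{+})ᵀ(x − x_{+}) for all x. Then ‖x* − x_{+}‖ ≤ sqrt( (f(x_{+}) − φ(x_{+}) + ε²/(4r)) / r ) + ε/(2r). -/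
open scoped RealInnerProductSpace

lemma prox_subgrad (n : ℕ) (f : EuclideanSpace ℝ (Fin n) → ℝ)
    (hf : ConvexOn ℝ Set.univ f) (r : ℝ) (hr : 0 < r)
    (z xs : EuclideanSpace ℝ (Fin n))
    (hxs : ∀ y, f xs + r / 2 * ‖xs - z‖ ^ 2 ≤ f y + r / 2 * ‖y - z‖ ^ 2)
    (y : EuclideanSpace ℝ (Fin n)) :
    f xs + r * ⟪z - xs, y - xs⟫ ≤ f y := by
  set a := xs - z with ha
  set b := y - xs with hb
  have hzb : ⟪z - xs, y - xs⟫ = -⟪a, b⟫ := by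
    rw [ha, hb, show z - xs = -(xs - z) by abel, inner_neg_left]
  rw [hzb]
  have key : ∀ t : ℝ, 0 < t → t ≤ 1 → f xs - r * ⟪a, b⟫ ≤ f y + r * t / 2 * ‖b‖ ^ 2 := by
    intro t ht ht1
    have hconv := hf.2 (Set.mem_univ xs) (Set.mem_univ y) (by linarith : (0:ℝ) ≤ 1 - t)
      (le_of_lt ht) (by ring)
    have hpt : (1 - t) • xs + t • y - z = a + t • b := by
      rw [ha, hb]
      module
    have hnorm : ‖a + t • b‖ ^ 2 = ‖a‖ ^ 2 + 2 * (t * ⟪a, b⟫) + t ^ 2 * ‖b‖ ^ 2 := by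
      rw [norm_add_sq_real, real_inner_smul_right, norm_smul]
      simp [mul_pow, abs_of_pos ht]
    have h1 := hxs ((1 - t) • xs + t • y)
    rw [hpt, hnorm] at h1
    simp only [smul_eq_mul] at hconv
    have h2 : f xs + r / 2 * ‖a‖ ^ 2 ≤
        (1 - t) * f xs + t * f y + r / 2 * (‖a‖ ^ 2 + 2 * (t * ⟪a, b⟫) + t ^ 2 * ‖b‖ ^ 2) := by
      linarith [hconv]
    -- divide by t
    nlinarith [sq_nonneg t, mul_pos hr ht]
  -- limit t → 0
  have hb2 : (0:ℝ) ≤ ‖b‖ ^ 2 := by positivity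
  refine le_of_forall_pos_le_add ?_
  intro δ hδ
  set t := min 1 (δ / (r / 2 * ‖b‖ ^ 2 + 1)) with htdef
  have hden : (0:ℝ) < r / 2 * ‖b‖ ^ 2 + 1 := by positivity
  have ht : 0 < t := lt_min one_pos (div_pos hδ hden)
  have ht1 : t ≤ 1 := min_le_left _ _
  have htle : t ≤ δ / (r / 2 * ‖b‖ ^ 2 + 1) := min_le_right _ _
  have hk := key t ht ht1
  have htd : t * (r / 2 * ‖b‖ ^ 2 + 1) ≤ δ := by
    have := (le_div_iff₀ hden).mp htle
    linarith
  have : r * t / 2 * ‖b‖ ^ 2 ≤ δ := by nlinarith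
  linarith

theorem dist_bound (n : ℕ) (f φ : EuclideanSpace ℝ (Fin n) → ℝ)
    (hf : ConvexOn ℝ Set.univ f) (hφ : ConvexOn ℝ Set.univ φ)
    (r ε : ℝ) (hr : 0 < r) (hε : 0 ≤ ε) (z xs xp : EuclideanSpace ℝ (Fin n))
    (hxs : ∀ y, f xs + r / 2 * ‖xs - z‖ ^ 2 ≤ f y + r / 2 * ‖y - z‖ ^ 2)
    (hxp : ∀ y, φ xp + r / 2 * ‖xp - z‖ ^ 2 ≤ φ y + r / 2 * ‖y - z‖ ^ 2)
    (htiger : ∀ x, f x + ε * ‖x - xp‖ ≥ φ xp + r * ⟪z - xp, x - xp⟫) :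
    ‖xs - xp‖ ≤ Real.sqrt ((f xp - φ xp + ε ^ 2 / (4 * r)) / r) + ε / (2 * r) := by
  set d := ‖xs - xp‖ with hd
  have hdnn : 0 ≤ d := norm_nonneg _
  -- subgradient inequality at xp
  have hsub := prox_subgrad n f hf r hr z xs hxs xp
  have htig := htiger xs
  -- inner product identity:
  -- ⟪z - xs, xp - xs⟫ + ⟪z - xp, xs - xp⟫ = -‖xs - xp‖²
  have hid : ⟪z - xs, xp - xs⟫ + ⟪z - xp, xs - xp⟫ = d ^ 2 := by
    rw [hd, ← real_inner_self_eq_norm_sq]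
    rw [show (xp - xs : EuclideanSpace ℝ (Fin n)) = -(xs - xp) by abel, inner_neg_right]
    rw [show (z - xp : EuclideanSpace ℝ (Fin n)) = (z - xs) + (xs - xp) by abel, inner_add_left]
    ring
  -- combine: r * d^2 - ε * d ≤ f xp - φ xp
  have hmain : r * d ^ 2 - ε * d ≤ f xp - φ xp := by
    have h1 : f xs + r * ⟪z - xs, xp - xs⟫ ≤ f xp := hsub
    have h2 : φ xp + r * ⟪z - xp, xs - xp⟫ ≤ f xs + ε * d := htig
    have hid' : r * ⟪z - xs, xp - xs⟫ + r * ⟪z - xp, xs - xp⟫ = r * d ^ 2 := by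
      linear_combination r * hid
    linarith
  have hA : (d - ε / (2 * r)) ^ 2 ≤ (f xp - φ xp + ε ^ 2 / (4 * r)) / r := by
    rw [le_div_iff₀ hr]
    have : (d - ε / (2 * r)) ^ 2 * r = r * d ^ 2 - ε * d + ε ^ 2 / (4 * r) := by
      field_simp
      ring
    rw [this]
    linarith
  have := Real.sqrt_le_sqrt hA
  rw [Real.sqrt_sq_eq_abs] at this
  have habs : d - ε / (2 * r) ≤ |d - ε / (2 * r)| := le_abs_self _
  linarith
end

section
/- Suppose x_{+} ∈ ℝⁿ satisfies f(x_{+}) ≤ φ(x_{+}), where φ is a model satisfying the approximate inequality f(x) + ε‖x − x_{+}‖ ≥ φ(x_{+}) + r(z − x_{+})ᵀ(x − x_{+}) for all x, and x_{+} = Prox_φ^r(z). Then ‖x_{+} − x*‖ ≤ ε/r, where x* = Prox_f^r(z). -/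
open scoped RealInnerProductSpace

theorem dist_bound_eps_over_r (n : ℕ) (f φ : EuclideanSpace ℝ (Fin n) → ℝ)
    (hf : ConvexOn ℝ Set.univ f) (hφ : ConvexOn ℝ Set.univ φ)
    (r ε : ℝ) (hr : 0 < r) (hε : 0 ≤ ε) (z xs xp : EuclideanSpace ℝ (Fin n))
    (hxs : ∀ y, f xs + r / 2 * ‖xs - z‖ ^ 2 ≤ f y + r / 2 * ‖y - z‖ ^ 2)
    (hxp : ∀ y, φ xp + r / 2 * ‖xp - z‖ ^ 2 ≤ φ y + r / 2 * ‖y - z‖ ^ 2)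
    (htiger : ∀ x, f x + ε * ‖x - xp‖ ≥ φ xp + r * ⟪z - xp, x - xp⟫)
    (hle : f xp ≤ φ xp) :
    ‖xp - xs‖ ≤ ε / r := by
  -- first-order optimality for xs, via strong convexity argument with λ → 0
  have key : ∀ l : ℝ, 0 < l → l ≤ 1 →
      0 ≤ (f xp - f xs + r * ⟪xs - z, xp - xs⟫) + r / 2 * l * ‖xp - xs‖ ^ 2 := by
    intro l hl0 hl1
    have hconv := hf.2 (Set.mem_univ xs) (Set.mem_univ xp)
      (by linarith : (0:ℝ) ≤ 1 - l) hl0.le (by ring)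
    have hy := hxs ((1 - l) • xs + l • xp)
    have hrep : (1 - l) • xs + l • xp - z = (xs - z) + l • (xp - xs) := by
      module
    have hnorm : ‖(1 - l) • xs + l • xp - z‖ ^ 2
        = ‖xs - z‖ ^ 2 + 2 * (l * ⟪xs - z, xp - xs⟫) + l ^ 2 * ‖xp - xs‖ ^ 2 := by
      rw [hrep, norm_add_sq_real, real_inner_smul_right, norm_smul]
      rw [mul_pow, Real.norm_eq_abs, sq_abs]
    rw [hnorm] at hy
    simp only [smul_eq_mul] at hconv
    nlinarith [hy, hconv, hl0]
  have hc : 0 ≤ f xp - f xs + r * ⟪xs - z, xp - xs⟫ := by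
    by_contra h
    push_neg at h
    set c := f xp - f xs + r * ⟪xs - z, xp - xs⟫ with hcdef
    have hd : 0 < r / 2 * ‖xp - xs‖ ^ 2 + 1 := by positivity
    set l := min 1 (-c / (r / 2 * ‖xp - xs‖ ^ 2 + 1)) with hldef
    have hl0 : 0 < l := lt_min one_pos (div_pos (by linarith) hd)
    have hl1 : l ≤ 1 := min_le_left _ _
    have h2 : l * (r / 2 * ‖xp - xs‖ ^ 2 + 1) ≤ -c :=
      (le_div_iff₀ hd).mp (min_le_right _ _)
    have h3 := key l hl0 hl1
    nlinarith [h2, h3, hl0]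
  -- rewrite as: f xs + r⟪z - xs, xp - xs⟫ ≤ f xp
  have hA : f xs + r * ⟪z - xs, xp - xs⟫ ≤ f xp := by
    have : ⟪z - xs, xp - xs⟫ = -⟪xs - z, xp - xs⟫ := by
      rw [← inner_neg_left]; congr 1; abel
    rw [this]; linarith
  have hB := htiger xs
  have hsum : ⟪z - xp, xs - xp⟫ + ⟪z - xs, xp - xs⟫ = ‖xp - xs‖ ^ 2 := by
    have h1 : (z - xs : EuclideanSpace ℝ (Fin n)) = (z - xp) + (xp - xs) := by abel
    have h2 : (xs - xp : EuclideanSpace ℝ (Fin n)) = -(xp - xs) := by abel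
    rw [h1, inner_add_left, h2, inner_neg_right, real_inner_self_eq_norm_sq]
    ring
  have hnrev : ‖xs - xp‖ = ‖xp - xs‖ := norm_sub_rev _ _
  rw [hnrev] at hB
  -- combine: r * ‖xp - xs‖^2 ≤ ε * ‖xp - xs‖
  have hfinal : r * ‖xp - xs‖ ^ 2 ≤ ε * ‖xp - xs‖ := by
    nlinarith [hB, hA, hle, hsum]
  rcases eq_or_lt_of_le (norm_nonneg (xp - xs)) with h0 | h0
  · rw [← h0]; positivity
  · rw [le_div_iff₀ hr]
    nlinarith [hfinal, h0]
end

section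
/- Let φ_k, φ_{k+1} : ℝⁿ → ℝ be convex, r > 0, z ∈ ℝⁿ, x_{k+1} := Prox_{φ_k}^r(z), x_{k+2} := Prox_{φ_{k+1}}^r(z), and suppose φ_{k+1}(x) ≥ φ_k(x_{k+1}) + r(z − x_{k+1})ᵀ(x − x_{k+1}) for all x. Then Φ(k+1) ≥ Φ(k) + (r/2)‖x_{k+2} − x_{k+1}‖², where Φ(j) := φ_j(x_{j+1}) + (r/2)‖z − x_{j+1}‖². -/
open scoped RealInnerProductSpace

theorem Phi_increase (n : ℕ) (φk φk1 : EuclideanSpace ℝ (Fin n) → ℝ)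
    (hφk : ConvexOn ℝ Set.univ φk) (hφk1 : ConvexOn ℝ Set.univ φk1)
    (r : ℝ) (hr : 0 < r) (z x1 x2 : EuclideanSpace ℝ (Fin n))
    (hx1 : ∀ y, φk x1 + r / 2 * ‖x1 - z‖ ^ 2 ≤ φk y + r / 2 * ‖y - z‖ ^ 2)
    (hx2 : ∀ y, φk1 x2 + r / 2 * ‖x2 - z‖ ^ 2 ≤ φk1 y + r / 2 * ‖y - z‖ ^ 2)
    (hagg : ∀ x, φk1 x ≥ φk x1 + r * ⟪z - x1, x - x1⟫) :
    φk1 x2 + r / 2 * ‖z - x2‖ ^ 2 ≥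
      (φk x1 + r / 2 * ‖z - x1‖ ^ 2) + r / 2 * ‖x2 - x1‖ ^ 2 := by
  have h := hagg x2
  have hid : z - x2 = (z - x1) - (x2 - x1) := by abel
  have hexp : ‖z - x2‖ ^ 2 = ‖z - x1‖ ^ 2 - 2 * ⟪z - x1, x2 - x1⟫ + ‖x2 - x1‖ ^ 2 := by
    rw [hid, norm_sub_sq_real]
  nlinarith [hexp, h]
end

section
/- Let f : ℝⁿ → ℝ be convex, r > 0, ε ≥ 0, z ∈ ℝⁿ, x* := Prox_f^r(z). Suppose p ∈ ℝⁿ satisfies f(x) + ε‖x − p‖ ≥ f(p) + r(z − p)ᵀ(x − p) for all x ∈ ℝⁿ. Then ‖x* − p‖ ≤ ε/r. -/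
open scoped RealInnerProductSpace

theorem accumulation_point_bound (n : ℕ) (f : EuclideanSpace ℝ (Fin n) → ℝ)
    (hf : ConvexOn ℝ Set.univ f) (r ε : ℝ) (hr : 0 < r) (hε : 0 ≤ ε)
    (z xs p : EuclideanSpace ℝ (Fin n))
    (hxs : ∀ y, f xs + r / 2 * ‖xs - z‖ ^ 2 ≤ f y + r / 2 * ‖y - z‖ ^ 2)
    (hp : ∀ x, f x + ε * ‖x - p‖ ≥ f p + r * ⟪z - p, x - p⟫) :
    ‖xs - p‖ ≤ ε / r := by
  -- key directional inequality for each t ∈ (0,1]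
  have key : ∀ t : ℝ, 0 < t → t ≤ 1 →
      f p - f xs ≥ -(r * ⟪xs - z, p - xs⟫) - r * t / 2 * ‖p - xs‖ ^ 2 := by
    intro t ht ht1
    set y := xs + t • (p - xs) with hy
    have hconv : f y ≤ (1 - t) * f xs + t * f p := by
      have hy2 : y = (1 - t) • xs + t • p := by
        rw [hy]; module
      rw [hy2]
      exact hf.2 (Set.mem_univ xs) (Set.mem_univ p) (by linarith) ht.le (by ring)
    have hexp : ‖y - z‖ ^ 2 = ‖xs - z‖ ^ 2 + 2 * t * ⟪xs - z, p - xs⟫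
        + t ^ 2 * ‖p - xs‖ ^ 2 := by
      have h1 : y - z = (xs - z) + t • (p - xs) := by rw [hy]; abel
      rw [h1, @norm_add_sq_real, real_inner_smul_right, norm_smul]
      simp [Real.norm_eq_abs, mul_pow, sq_abs]
      ring
    have h := hxs y
    rw [hexp] at h
    have h2 : f xs ≤ (1 - t) * f xs + t * f p + r / 2 * (2 * t * ⟪xs - z, p - xs⟫
        + t ^ 2 * ‖p - xs‖ ^ 2) := by nlinarith
    have h3 : 0 ≤ t * (f p - f xs + r * ⟪xs - z, p - xs⟫ + r * t / 2 * ‖p - xs‖ ^ 2) := by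
      nlinarith
    nlinarith [mul_pos ht ht]
  -- inner product identity
  have hid : ⟪xs - z, p - xs⟫ = ⟪z - xs, xs - p⟫ := by
    have : xs - z = -(z - xs) := by abel
    have h2 : p - xs = -(xs - p) := by abel
    rw [this, h2, inner_neg_neg]
  have hid2 : ⟪z - p, xs - p⟫ - ⟪z - xs, xs - p⟫ = ‖xs - p‖ ^ 2 := by
    rw [← inner_sub_left, show (z - p) - (z - xs) = xs - p from by abel,
      real_inner_self_eq_norm_sq]
  have hnorm : ‖p - xs‖ = ‖xs - p‖ := by rw [norm_sub_rev]
  -- combined: for all t ∈ (0,1], ε‖xs-p‖ ≥ r‖xs-p‖² - r*t/2*‖xs-p‖²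
  have main : ∀ t : ℝ, 0 < t → t ≤ 1 →
      ε * ‖xs - p‖ ≥ r * ‖xs - p‖ ^ 2 - r * t / 2 * ‖xs - p‖ ^ 2 := by
    intro t ht ht1
    have h1 := key t ht ht1
    have h2 := hp xs
    rw [hid, hnorm] at h1
    nlinarith [hid2]
  by_contra hcon
  push_neg at hcon
  have hd : 0 < ‖xs - p‖ := lt_of_le_of_lt (div_nonneg hε hr.le) hcon
  have hεlt : ε < r * ‖xs - p‖ := by
    rw [div_lt_iff₀ hr] at hcon; linarith [hcon]
  set d := ‖xs - p‖
  set t := min 1 ((r * d - ε) / (r * d)) with htdef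
  have hrd : 0 < r * d := mul_pos hr hd
  have ht0 : 0 < t := lt_min one_pos (div_pos (by linarith) hrd)
  have ht1 : t ≤ 1 := min_le_left _ _
  have htle : t ≤ (r * d - ε) / (r * d) := min_le_right _ _
  have h1 := main t ht0 ht1
  have h2 : r * t / 2 * d ^ 2 < (r * d - ε) * d := by
    have : t * (r * d) ≤ r * d - ε := by
      rw [← le_div_iff₀ hrd]; exact htle
    nlinarith
  nlinarith
end
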